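/- In the anti-plane shear setting (W(F) = min(μ₊|F|²/2 + w₊, μ₋|F|²/2 + w₋) with μ₊ > μ₋ > 0, w₊ < w₋), for F₀ with ε₊ ≤ |F₀| ≤ ε₋, setting F± = (ε±/|F₀|)F₀ and θ = (|F₀| − ε₋)/(ε₊ − ε₋), we have θ ∈ [0,1], F₀ = θF₊ + (1−θ)F₋, and θW(F₊) + (1−θ)W(F₋) = G(F₀), where G is the convex envelope formula of the previous statement. -/

import Mathlib

/-- Anti-plane shear double-well energy density on `ℝ²`. -/
noncomputable def Wap (μp μm wp wm : ℝ) (F : EuclideanSpace ℝ (Fin 2)) : ℝ :=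
  min (μp / 2 * ‖F‖ ^ 2 + wp) (μm / 2 * ‖F‖ ^ 2 + wm)

/-- Inner radius of the binodal annulus. -/
noncomputable def εp (μp μm wp wm : ℝ) : ℝ :=
  Real.sqrt (-2 * (wp - wm) * μm / ((μp - μm) * μp))

/-- Outer radius of the binodal annulus. -/
noncomputable def εm (μp μm wp wm : ℝ) : ℝ :=
  Real.sqrt (-2 * (wp - wm) * μp / ((μp - μm) * μm))

/-- Candidate convex envelope of the anti-plane shear energy. -/
noncomputable def Gap (μp μm wp wm : ℝ) (F : EuclideanSpace ℝ (Fin 2)) : ℝ :=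
  if ‖F‖ ≤ εp μp μm wp wm then μp / 2 * ‖F‖ ^ 2 + wp
  else if ‖F‖ ≤ εm μp μm wp wm then
    ‖F‖ * Real.sqrt (-2 * (wp - wm) * μp * μm / (μp - μm)) +
      (μp * wp - μm * wm) / (μp - μm)
  else μm / 2 * ‖F‖ ^ 2 + wm

set_option maxHeartbeats 1000000 in
theorem stmt10 (μp μm wp wm : ℝ) (hμm : 0 < μm) (hμ : μm < μp) (hw : wp < wm)
    (F₀ : EuclideanSpace ℝ (Fin 2))
    (h₁ : εp μp μm wp wm ≤ ‖F₀‖) (h₂ : ‖F₀‖ ≤ εm μp μm wp wm) :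
    (‖F₀‖ - εm μp μm wp wm) / (εp μp μm wp wm - εm μp μm wp wm) ∈ Set.Icc (0:ℝ) 1 ∧
    F₀ = ((‖F₀‖ - εm μp μm wp wm) / (εp μp μm wp wm - εm μp μm wp wm)) •
           ((εp μp μm wp wm / ‖F₀‖) • F₀) +
         (1 - (‖F₀‖ - εm μp μm wp wm) / (εp μp μm wp wm - εm μp μm wp wm)) •
           ((εm μp μm wp wm / ‖F₀‖) • F₀) ∧
    ((‖F₀‖ - εm μp μm wp wm) / (εp μp μm wp wm - εm μp μm wp wm)) *
        Wap μp μm wp wm ((εp μp μm wp wm / ‖F₀‖) • F₀) +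
      (1 - (‖F₀‖ - εm μp μm wp wm) / (εp μp μm wp wm - εm μp μm wp wm)) *
        Wap μp μm wp wm ((εm μp μm wp wm / ‖F₀‖) • F₀) =
      Gap μp μm wp wm F₀ :=  by
  have hμp : 0 < μp := hμm.trans hμ
  have hD : 0 < μp - μm := sub_pos.mpr hμ
  have hW : 0 < wm - wp := sub_pos.mpr hw
  set a := εp μp μm wp wm with ha_def
  set b := εm μp μm wp wm with hb_def
  set s := Real.sqrt (-2 * (wp - wm) * μp * μm / (μp - μm)) with hs_def
  set r := ‖F₀‖ with hr_def
  have hA : (0:ℝ) < -2 * (wp - wm) * μm / ((μp - μm) * μp) := by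
    apply div_pos (by nlinarith) (by positivity)
  have hB : (0:ℝ) < -2 * (wp - wm) * μp / ((μp - μm) * μm) := by
    apply div_pos (by nlinarith) (by positivity)
  have hS : (0:ℝ) < -2 * (wp - wm) * μp * μm / (μp - μm) := by
    apply div_pos (by nlinarith [mul_pos (mul_pos hW hμp) hμm]) (by positivity)
  have ha2 : a ^ 2 = -2 * (wp - wm) * μm / ((μp - μm) * μp) := by
    rw [ha_def, εp, Real.sq_sqrt hA.le]
  have hb2 : b ^ 2 = -2 * (wp - wm) * μp / ((μp - μm) * μm) := by
    rw [hb_def, εm, Real.sq_sqrt hB.le]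
  have ha0 : 0 < a := by rw [ha_def, εp]; exact Real.sqrt_pos.mpr hA
  have hb0 : 0 < b := by rw [hb_def, εm]; exact Real.sqrt_pos.mpr hB
  have hr0 : 0 < r := lt_of_lt_of_le ha0 h₁
  have hab : a < b := by
    rw [ha_def, hb_def, εp, εm]
    apply Real.sqrt_lt_sqrt hA.le
    rw [div_lt_div_iff₀ (by positivity) (by positivity)]
    nlinarith [mul_pos (mul_pos (mul_pos hW hD) hD) (by linarith : (0:ℝ) < μp + μm)]
  have hsa : s = μp * a := by
    rw [hs_def, ha_def, εp]
    rw [show (-2 * (wp - wm) * μp * μm / (μp - μm)) =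
        μp ^ 2 * (-2 * (wp - wm) * μm / ((μp - μm) * μp)) by field_simp]
    rw [Real.sqrt_mul (sq_nonneg μp), Real.sqrt_sq hμp.le]
  have hsb : s = μm * b := by
    rw [hs_def, hb_def, εm]
    rw [show (-2 * (wp - wm) * μp * μm / (μp - μm)) =
        μm ^ 2 * (-2 * (wp - wm) * μp / ((μp - μm) * μm)) by field_simp]
    rw [Real.sqrt_mul (sq_nonneg μm), Real.sqrt_sq hμm.le]
  set θ := (r - b) / (a - b) with hθ_def
  have hane : a - b ≠ 0 := by linarith
  have hθ0 : 0 ≤ θ := by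
    rw [hθ_def, div_nonneg_iff]
    right
    constructor <;> linarith
  have hθ1 : θ ≤ 1 := by
    rw [hθ_def, div_le_one_of_neg (by linarith)]
    linarith
  have hθr : θ * a + (1 - θ) * b = r := by
    rw [hθ_def]; field_simp; ring
  refine ⟨⟨hθ0, hθ1⟩, ?_, ?_⟩
  · rw [smul_smul, smul_smul, ← add_smul]
    have hcoef : θ * (a / r) + (1 - θ) * (b / r) = 1 := by
      rw [hθ_def]; field_simp; ring
    rw [hcoef, one_smul]
  · have hna : ‖(a / r) • F₀‖ = a := by
      rw [norm_smul, Real.norm_eq_abs, abs_of_pos (by positivity), ← hr_def]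
      field_simp
    have hnb : ‖(b / r) • F₀‖ = b := by
      rw [norm_smul, Real.norm_eq_abs, abs_of_pos (by positivity), ← hr_def]
      field_simp
    have hA' : a ^ 2 * ((μp - μm) * μp) = 2 * (wm - wp) * μm := by
      rw [ha2]; field_simp; ring
    have hB' : b ^ 2 * ((μp - μm) * μm) = 2 * (wm - wp) * μp := by
      rw [hb2]; field_simp; ring
    have hWa : Wap μp μm wp wm ((a / r) • F₀) = μp / 2 * a ^ 2 + wp := by
      rw [Wap, hna]
      apply min_eq_left
      have key : (μp - μm) * a ^ 2 ≤ 2 * (wm - wp) := by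
        rw [← sub_nonneg]
        have h2 : 2 * (wm - wp) - (μp - μm) * a ^ 2 =
            (2 * (wm - wp) * μp - a ^ 2 * ((μp - μm) * μp)) / μp := by
          field_simp
        rw [h2, hA']
        apply div_nonneg (by nlinarith) hμp.le
      linarith
    have hWb : Wap μp μm wp wm ((b / r) • F₀) = μm / 2 * b ^ 2 + wm := by
      rw [Wap, hnb]
      apply min_eq_right
      have key : 2 * (wm - wp) ≤ (μp - μm) * b ^ 2 := by
        rw [← sub_nonneg]
        have h2 : (μp - μm) * b ^ 2 - 2 * (wm - wp) =
            (b ^ 2 * ((μp - μm) * μm) - 2 * (wm - wp) * μm) / μm := by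
          field_simp
        rw [h2, hB']
        apply div_nonneg (by nlinarith) hμm.le
      linarith
    have hca : wp - μp / 2 * a ^ 2 = (μp * wp - μm * wm) / (μp - μm) := by
      rw [ha2]; field_simp; ring
    have hcb : wm - μm / 2 * b ^ 2 = (μp * wp - μm * wm) / (μp - μm) := by
      rw [hb2]; field_simp; ring
    have hLa : μp / 2 * a ^ 2 + wp = s * a + (μp * wp - μm * wm) / (μp - μm) := by
      rw [hsa]; linear_combination hca
    have hLb : μm / 2 * b ^ 2 + wm = s * b + (μp * wp - μm * wm) / (μp - μm) := by
      rw [hsb]; linear_combination hcb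
    rw [hWa, hWb, hLa, hLb]
    have hsum : θ * (s * a + (μp * wp - μm * wm) / (μp - μm)) +
        (1 - θ) * (s * b + (μp * wp - μm * wm) / (μp - μm)) =
        s * r + (μp * wp - μm * wm) / (μp - μm) := by
      linear_combination s * hθr
    rw [hsum, Gap, ← ha_def, ← hb_def, ← hs_def, ← hr_def]
    split_ifs with h1 h2
    · have hra : r = a := le_antisymm h1 h₁
      rw [hra]; linarith [hLa]
    · ring
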